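/- The number of isomorphism classes of magmas on a set with cardinality n equals (1/n!) · ∑_{σ ∈ S_n} ∏_{r,s=1}^n (∑_{d ∣ lcm(r,s)} d · j_d(σ))^{gcd(r,s) · j_r(σ) · j_s(σ)}, where the sum ranges over all permutations σ of Fin n and (j_i(σ))_i denotes the cycle type of σ. -/

import Mathlib

/-- Two binary operations on `Fin n` are isomorphic as magmas if there is a bijection
of `Fin n` transporting one operation to the other. -/
def MagmaIso (n : ℕ) (f g : Fin n → Fin n → Fin n) : Prop :=
  ∃ φ : Fin n ≃ Fin n, ∀ a a' : Fin n, φ (f a a') = g (φ a) (φ a')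

/-- `cycleCount σ i` is the number of `i`-cycles in the disjoint cycle decomposition of the
permutation `σ` (fixed points counted as `1`-cycles). -/
noncomputable def cycleCount {X : Type*} (σ : Equiv.Perm X) (i : ℕ) : ℕ :=
  Nat.card {a : X // Function.minimalPeriod (⇑σ) a = i} / i

open Function Equiv MulAction Finset
open scoped Classical

section Aux

variable {α β : Type*} [Fintype α] [Fintype β]

/-- quotient by the cyclic group generated by a permutation -/
noncomputable abbrev Qt (τ : Equiv.Perm α) :=
  Quotient (MulAction.orbitRel (Subgroup.zpowers τ) α)

lemma perm_smul_eq (τ : Equiv.Perm α) : (fun a => τ • a) = ⇑τ := rfl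

lemma minPeriod_pos (τ : Equiv.Perm α) (a : α) : 0 < Function.minimalPeriod (⇑τ) a := by
  have := MulAction.minimalPeriod_pos (a := τ) (b := a)
  have h := this.out
  rw [perm_smul_eq] at h
  exact Nat.pos_of_ne_zero h

lemma minPeriod_apply (τ : Equiv.Perm α) (a : α) :
    Function.minimalPeriod (⇑τ) (τ a) = Function.minimalPeriod (⇑τ) a := by
  apply Function.minimalPeriod_apply
  rw [← Function.minimalPeriod_pos_iff_mem_periodicPts]
  exact minPeriod_pos τ a

lemma zpow_apply_eq_iff (τ : Equiv.Perm α) (a : α) (i : ℤ) :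
    (τ ^ i) a = a ↔ (Function.minimalPeriod (⇑τ) a : ℤ) ∣ i := by
  have := MulAction.zpow_smul_eq_iff_minimalPeriod_dvd (a := τ) (b := a) (n := i)
  rwa [perm_smul_eq] at this

lemma pow_apply_eq_iff (τ : Equiv.Perm α) (a : α) (m : ℕ) :
    (τ ^ m) a = a ↔ Function.minimalPeriod (⇑τ) a ∣ m := by
  have := MulAction.pow_smul_eq_iff_minimalPeriod_dvd (a := τ) (b := a) (n := m)
  rwa [perm_smul_eq] at this

lemma zpow_equivariant {τ : Equiv.Perm α} {σ : Equiv.Perm β} {g : α → β}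
    (h : ∀ a, g (τ a) = σ (g a)) (i : ℤ) (a : α) : g ((τ ^ i) a) = (σ ^ i) (g a) := by
  have hinv : ∀ a, g (τ⁻¹ a) = σ⁻¹ (g a) := by
    intro a
    apply σ.injective
    rw [← h]
    simp
  induction i using Int.induction_on generalizing a with
  | zero => simp
  | succ k ih =>
      simp only [zpow_add_one, Equiv.Perm.mul_apply, ih, h]
  | pred k ih =>
      simp only [zpow_sub_one, Equiv.Perm.mul_apply, ih, hinv]

lemma exists_zpow_out (τ : Equiv.Perm α) (a : α) :
    ∃ i : ℤ, (τ ^ i) ((Quotient.mk _ a : Qt τ).out) = a := by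
  have h : (Quotient.mk _ a : Qt τ).out ∈ MulAction.orbit (Subgroup.zpowers τ) a := by
    rw [← MulAction.orbitRel_apply]
    exact Quotient.mk_out a
  obtain ⟨⟨u, hu⟩, huu⟩ := h
  obtain ⟨k, rfl⟩ := Subgroup.mem_zpowers_iff.mp hu
  refine ⟨-k, ?_⟩
  have : (τ ^ k) a = (Quotient.mk _ a : Qt τ).out := huu
  rw [← this, ← Equiv.Perm.mul_apply, ← zpow_add]
  simp

/-- counting equivariant maps -/
lemma card_equivariant (τ : Equiv.Perm α) (σ : Equiv.Perm β) :
    Nat.card {g : α → β // ∀ a, g (τ a) = σ (g a)} =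
      ∏ q : Qt τ, Nat.card {y : β // (σ ^ (Function.minimalPeriod (⇑τ) q.out)) y = y} := by
  rw [← Nat.card_pi]
  apply Nat.card_eq_of_bijective
    (fun g q => ⟨g.1 q.out, by
      have h1 := zpow_equivariant g.2 (Function.minimalPeriod (⇑τ) q.out) q.out
      rw [zpow_natCast, zpow_natCast] at h1
      have h2 : (τ ^ (Function.minimalPeriod (⇑τ) q.out)) q.out = q.out :=
        (pow_apply_eq_iff τ q.out _).mpr dvd_rfl
      rw [← h1, h2]⟩)
  constructor
  · rintro ⟨g, hg⟩ ⟨g', hg'⟩ hgg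
    ext a
    obtain ⟨i, hi⟩ := exists_zpow_out τ a
    have h1 := zpow_equivariant hg i ((Quotient.mk _ a : Qt τ).out)
    have h2 := zpow_equivariant hg' i ((Quotient.mk _ a : Qt τ).out)
    rw [hi] at h1 h2
    have := congrFun hgg (Quotient.mk _ a)
    simp only [Subtype.mk.injEq] at this
    show g a = g' a
    rw [h1, h2, this]
  · intro v
    set k : α → ℤ := fun a => (exists_zpow_out τ a).choose with hkdef
    have hk : ∀ a, (τ ^ k a) ((Quotient.mk _ a : Qt τ)).out = a :=
      fun a => (exists_zpow_out τ a).choose_spec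
    set g : α → β := fun a => (σ ^ k a) (v (Quotient.mk _ a)).1 with hgdef
    have hv : ∀ (q : Qt τ) (i : ℤ), (Function.minimalPeriod (⇑τ) q.out : ℤ) ∣ i →
        (σ ^ i) (v q).1 = (v q).1 := by
      intro q i hi
      refine (zpow_apply_eq_iff σ _ i).mpr ?_
      have h2 : Function.minimalPeriod (⇑σ) (v q).1 ∣ Function.minimalPeriod (⇑τ) q.out :=
        (pow_apply_eq_iff σ _ _).mp (v q).2
      exact dvd_trans (Int.natCast_dvd_natCast.mpr h2) hi
    have hmk : ∀ a, (Quotient.mk _ (τ a) : Qt τ) = Quotient.mk _ a := by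
      intro a
      apply Quotient.sound
      exact ⟨⟨τ, Subgroup.mem_zpowers τ⟩, rfl⟩
    have hgequi : ∀ a, g (τ a) = σ (g a) := by
      intro a
      have e1 : (τ ^ k (τ a)) ((Quotient.mk _ a : Qt τ)).out = τ a := by
        have := hk (τ a); rwa [hmk] at this
      have e2 : (τ ^ (k a + 1)) ((Quotient.mk _ a : Qt τ)).out = τ a := by
        rw [add_comm, zpow_add, zpow_one, Equiv.Perm.mul_apply, hk]
      have e3 : (τ ^ (k (τ a) - (k a + 1))) ((Quotient.mk _ a : Qt τ)).out =
          (Quotient.mk _ a : Qt τ).out := by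
        rw [sub_eq_neg_add, zpow_add, Equiv.Perm.mul_apply, e1, ← e2,
          ← Equiv.Perm.mul_apply, ← zpow_add, neg_add_cancel, zpow_zero]
        rfl
      have hdvd := (zpow_apply_eq_iff τ _ _).mp e3
      show (σ ^ k (τ a)) (v (Quotient.mk _ (τ a))).1 = σ ((σ ^ k a) (v (Quotient.mk _ a)).1)
      rw [hmk]
      have hsplit : k (τ a) = (k a + 1) + (k (τ a) - (k a + 1)) := by ring
      rw [hsplit, zpow_add, Equiv.Perm.mul_apply, hv _ _ hdvd]
      have h1 : k a + 1 = 1 + k a := add_comm _ _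
      rw [h1, zpow_add, zpow_one, Equiv.Perm.mul_apply]
    refine ⟨⟨g, hgequi⟩, ?_⟩
    funext q
    apply Subtype.ext
    show (σ ^ k q.out) (v (Quotient.mk _ q.out)).1 = (v q).1
    have hout : (Quotient.mk _ q.out : Qt τ) = q := Quotient.out_eq q
    rw [hout]
    apply hv
    refine (zpow_apply_eq_iff τ _ _).mp ?_
    have := hk q.out
    rwa [hout] at this

/-- fiber counting lemma -/
lemma fib (τ : Equiv.Perm α) (P : α → Prop) (hP : ∀ a, P (τ a) ↔ P a) (d : ℕ)
    (hd : ∀ a, P a → Function.minimalPeriod (⇑τ) a = d) :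
    Nat.card {a : α // P a} = d * Nat.card {q : Qt τ // P q.out} := by
  -- P is invariant along orbits
  have hPz : ∀ (i : ℤ) (a : α), P ((τ ^ i) a) ↔ P a := by
    intro i
    induction i using Int.induction_on with
    | zero => simp
    | succ k ih => intro a; rw [zpow_add_one, Equiv.Perm.mul_apply, ih, hP]
    | pred k ih =>
        intro a
        rw [zpow_sub_one, Equiv.Perm.mul_apply, ih]
        exact Iff.symm (by simpa using hP (τ⁻¹ a))
  have horb : ∀ a b : α, (Quotient.mk _ a : Qt τ) = Quotient.mk _ b → (P a ↔ P b) := by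
    intro a b hab
    have h0 : a ∈ MulAction.orbit (Subgroup.zpowers τ) b := Quotient.exact hab
    obtain ⟨⟨u, hu⟩, huu⟩ := h0
    obtain ⟨k, rfl⟩ := Subgroup.mem_zpowers_iff.mp hu
    have : (τ ^ k) b = a := huu
    rw [← this, hPz]
  have hPout : ∀ a : α, P a → P (Quotient.mk (MulAction.orbitRel (Subgroup.zpowers τ) α) a).out := by
    intro a ha
    have := horb _ a ((Quotient.mk _ a : Qt τ)).out_eq
    exact this.mpr ha
  classical
  rw [Nat.card_eq_fintype_card, Nat.card_eq_fintype_card, Fintype.card_subtype,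
    Fintype.card_subtype]
  rw [Finset.card_eq_sum_card_fiberwise
    (f := fun a => (Quotient.mk _ a : Qt τ)) (t := Finset.univ.filter fun q => P q.out)
    (fun a ha => by
      simp only [Finset.coe_filter, Finset.mem_coe, Set.mem_setOf_eq, Finset.mem_filter, Finset.mem_univ, true_and] at ha ⊢
      exact hPout a ha)]
  have hfibcard : ∀ q ∈ Finset.univ.filter (fun q : Qt τ => P q.out),
      ((Finset.univ.filter P).filter (fun a => (Quotient.mk _ a : Qt τ) = q)).card = d := by
    intro q hq
    simp only [Finset.mem_filter, Finset.mem_univ, true_and] at hq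
    have hfiber : (Finset.univ.filter P).filter (fun a => (Quotient.mk _ a : Qt τ) = q) =
        Finset.univ.filter (fun a => (Quotient.mk _ a : Qt τ) = q) := by
      ext a
      simp only [Finset.mem_filter, Finset.mem_univ, true_and, and_iff_right_iff_imp]
      intro ha
      exact (horb a q.out (by rw [ha, Quotient.out_eq])).mpr hq
    rw [hfiber]
    have : (Finset.univ.filter (fun a => (Quotient.mk _ a : Qt τ) = q)).card =
        Fintype.card (MulAction.orbit (Subgroup.zpowers τ) q.out) := by
      rw [← Fintype.card_subtype]
      apply Fintype.card_congr
      apply Equiv.subtypeEquivRight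
      intro a
      rw [← Quotient.out_eq q, Quotient.eq, Quotient.out_eq, MulAction.orbitRel_apply]
    rw [this, ← MulAction.minimalPeriod_eq_card]
    rw [show (fun x => τ • x) = ⇑τ from rfl]
    exact hd q.out hq
  rw [Finset.sum_congr rfl hfibcard, Finset.sum_const, smul_eq_mul, mul_comm]

lemma card_minPeriod_eq (σ : Equiv.Perm β) (d : ℕ) :
    Nat.card {y : β // Function.minimalPeriod (⇑σ) y = d} = d * cycleCount σ d := by
  have h := fib σ (fun y => Function.minimalPeriod (⇑σ) y = d)
    (fun a => by
      show Function.minimalPeriod (⇑σ) (σ a) = d ↔ Function.minimalPeriod (⇑σ) a = d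
      rw [minPeriod_apply]) d (fun a ha => ha)
  unfold cycleCount
  rw [h]
  rcases Nat.eq_zero_or_pos d with hd | hd
  · simp [hd]
  · rw [Nat.mul_div_cancel_left _ hd]

lemma card_fix_eq (σ : Equiv.Perm β) (m : ℕ) (hm : m ≠ 0) :
    Nat.card {y : β // (σ ^ m) y = y} = ∑ d ∈ m.divisors, d * cycleCount σ d := by
  classical
  rw [Nat.card_eq_fintype_card, Fintype.card_subtype]
  rw [Finset.card_eq_sum_card_fiberwise (f := fun y => Function.minimalPeriod (⇑σ) y)
    (t := m.divisors) (fun y hy => by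
      simp only [Finset.coe_filter, Finset.mem_coe, Set.mem_setOf_eq, Finset.mem_filter, Finset.mem_univ, true_and] at hy ⊢
      exact Nat.mem_divisors.mpr ⟨(pow_apply_eq_iff σ y m).mp hy, hm⟩)]
  refine Finset.sum_congr rfl fun d hd => ?_
  have hdvd : d ∣ m := (Nat.mem_divisors.mp hd).1
  have heq : (Finset.univ.filter (fun y => (σ ^ m) y = y)).filter
      (fun y => Function.minimalPeriod (⇑σ) y = d) =
      Finset.univ.filter (fun y => Function.minimalPeriod (⇑σ) y = d) := by
    ext y
    simp only [Finset.mem_filter, Finset.mem_univ, true_and, and_iff_right_iff_imp]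
    intro hy
    exact (pow_apply_eq_iff σ y m).mpr (hy ▸ hdvd)
  rw [heq, ← Fintype.card_subtype, ← Nat.card_eq_fintype_card, card_minPeriod_eq]

lemma minPeriod_le_card (σ : Equiv.Perm β) (a : β) :
    Function.minimalPeriod (⇑σ) a ≤ Fintype.card β := by
  classical
  rw [← perm_smul_eq σ, MulAction.minimalPeriod_eq_card]
  exact Fintype.card_le_of_injective Subtype.val Subtype.val_injective

end Aux

lemma fixcard {n : ℕ} (σ : Equiv.Perm (Fin n)) :
    Nat.card {g : Fin n × Fin n → Fin n //
        ∀ p, g ((Equiv.prodCongr σ σ) p) = σ (g p)} =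
      ∏ r ∈ Finset.Icc 1 n, ∏ s ∈ Finset.Icc 1 n,
        (∑ d ∈ (Nat.lcm r s).divisors, d * cycleCount σ d) ^
          (Nat.gcd r s * cycleCount σ r * cycleCount σ s) := by
  classical
  set τ := Equiv.prodCongr σ σ with hτ
  have hτcoe : ⇑τ = Prod.map ⇑σ ⇑σ := by
    funext p
    rfl
  have hL : ∀ p : Fin n × Fin n, Function.minimalPeriod (⇑τ) p =
      Nat.lcm (Function.minimalPeriod (⇑σ) p.1) (Function.minimalPeriod (⇑σ) p.2) := by
    intro p; rw [hτcoe, Function.minimalPeriod_prodMap]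
  set t : Qt τ → ℕ × ℕ := fun q =>
    (Function.minimalPeriod (⇑σ) q.out.1, Function.minimalPeriod (⇑σ) q.out.2) with ht
  set F : ℕ × ℕ → ℕ := fun rs => ∑ d ∈ (Nat.lcm rs.1 rs.2).divisors, d * cycleCount σ d with hF
  rw [card_equivariant τ σ]
  have hfac : ∀ q : Qt τ,
      Nat.card {y : Fin n // (σ ^ (Function.minimalPeriod (⇑τ) q.out)) y = y} = F (t q) := by
    intro q
    have hpos1 := minPeriod_pos σ q.out.1
    have hpos2 := minPeriod_pos σ q.out.2
    rw [card_fix_eq σ _ (by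
      rw [hL q.out]
      exact Nat.lcm_ne_zero hpos1.ne' hpos2.ne')]
    simp only [hF, ht, hL q.out]
  have hmaps : ∀ q ∈ (Finset.univ : Finset (Qt τ)),
      t q ∈ Finset.Icc 1 n ×ˢ Finset.Icc 1 n := by
    intro q _
    simp only [ht, Finset.mem_product, Finset.mem_Icc]
    refine ⟨⟨minPeriod_pos σ q.out.1, ?_⟩, ⟨minPeriod_pos σ q.out.2, ?_⟩⟩
    · simpa using minPeriod_le_card σ q.out.1
    · simpa using minPeriod_le_card σ q.out.2
  have hcount : ∀ r s : ℕ, 1 ≤ r → 1 ≤ s →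
      (Finset.univ.filter (fun q : Qt τ => t q = (r, s))).card =
      Nat.gcd r s * cycleCount σ r * cycleCount σ s := by
    intro r s hr hs
    have hlcm : Nat.lcm r s ≠ 0 := Nat.lcm_ne_zero (by omega) (by omega)
    have hfib := fib τ (fun p => Function.minimalPeriod (⇑σ) p.1 = r ∧
        Function.minimalPeriod (⇑σ) p.2 = s)
      (fun p => by
        show Function.minimalPeriod (⇑σ) (τ p).1 = r ∧ Function.minimalPeriod (⇑σ) (τ p).2 = s ↔
          Function.minimalPeriod (⇑σ) p.1 = r ∧ Function.minimalPeriod (⇑σ) p.2 = s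
        have h1 : (τ p).1 = σ p.1 := rfl
        have h2 : (τ p).2 = σ p.2 := rfl
        rw [h1, h2, minPeriod_apply, minPeriod_apply])
      (Nat.lcm r s) (fun p hp => by rw [hL p, hp.1, hp.2])
    have h1 : Nat.card {p : Fin n × Fin n // Function.minimalPeriod (⇑σ) p.1 = r ∧
        Function.minimalPeriod (⇑σ) p.2 = s} =
        (r * cycleCount σ r) * (s * cycleCount σ s) := by
      rw [Nat.card_congr (Equiv.subtypeProdEquivProd
        (p := fun x => Function.minimalPeriod (⇑σ) x = r)
        (q := fun y => Function.minimalPeriod (⇑σ) y = s)), Nat.card_prod,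
        card_minPeriod_eq, card_minPeriod_eq]
    have h2 : Nat.card {q : Qt τ // Function.minimalPeriod (⇑σ) q.out.1 = r ∧
        Function.minimalPeriod (⇑σ) q.out.2 = s} =
        (Finset.univ.filter (fun q : Qt τ => t q = (r, s))).card := by
      rw [Nat.card_eq_fintype_card, Fintype.card_subtype]
      congr 1
      ext q
      simp [ht, Prod.ext_iff]
    rw [h1, h2] at hfib
    apply Nat.eq_of_mul_eq_mul_left (Nat.pos_of_ne_zero hlcm)
    rw [← hfib]
    have hgl := Nat.gcd_mul_lcm r s
    calc r * cycleCount σ r * (s * cycleCount σ s)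
        = (Nat.gcd r s * Nat.lcm r s) * (cycleCount σ r * cycleCount σ s) := by rw [hgl]; ring
      _ = Nat.lcm r s * (Nat.gcd r s * cycleCount σ r * cycleCount σ s) := by ring
  calc ∏ q : Qt τ, Nat.card {y : Fin n // (σ ^ (Function.minimalPeriod (⇑τ) q.out)) y = y}
      = ∏ q : Qt τ, F (t q) := Finset.prod_congr rfl (fun q _ => hfac q)
    _ = ∏ rs ∈ Finset.Icc 1 n ×ˢ Finset.Icc 1 n,
          ∏ q ∈ Finset.univ.filter (fun q => t q = rs), F (t q) :=
        (Finset.prod_fiberwise_of_maps_to hmaps _).symm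
    _ = ∏ rs ∈ Finset.Icc 1 n ×ˢ Finset.Icc 1 n,
          F rs ^ (Finset.univ.filter (fun q => t q = rs)).card := by
        refine Finset.prod_congr rfl fun rs _ => ?_
        rw [Finset.prod_congr rfl (fun q hq => by
          rw [(Finset.mem_filter.mp hq).2]), Finset.prod_const]
    _ = ∏ r ∈ Finset.Icc 1 n, ∏ s ∈ Finset.Icc 1 n,
          (∑ d ∈ (Nat.lcm r s).divisors, d * cycleCount σ d) ^
            (Nat.gcd r s * cycleCount σ r * cycleCount σ s) := by
        rw [Finset.prod_product]
        refine Finset.prod_congr rfl fun r hr => Finset.prod_congr rfl fun s hs => ?_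
        rw [hcount r s (Finset.mem_Icc.mp hr).1 (Finset.mem_Icc.mp hs).1]

/-- Type synonym for binary operations on `Fin n` (in uncurried form), to carry the
conjugation action of the symmetric group without instance clashes. -/
def MagmaT (n : ℕ) : Type := Fin n × Fin n → Fin n

instance (n : ℕ) : Fintype (MagmaT n) := by unfold MagmaT; infer_instance

instance (n : ℕ) : SMul (Equiv.Perm (Fin n)) (MagmaT n) :=
  ⟨fun φ g => fun p => φ (g (φ⁻¹ p.1, φ⁻¹ p.2))⟩

lemma magma_smul_def {n : ℕ} (φ : Equiv.Perm (Fin n)) (g : MagmaT n) (p : Fin n × Fin n) :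
    (φ • g) p = φ (g (φ⁻¹ p.1, φ⁻¹ p.2)) := rfl

instance (n : ℕ) : MulAction (Equiv.Perm (Fin n)) (MagmaT n) where
  one_smul g := by funext p; simp [magma_smul_def]
  mul_smul φ ψ g := by
    funext p
    simp [magma_smul_def, Equiv.Perm.mul_apply]

lemma smul_eq_iff_equi {n : ℕ} (φ : Equiv.Perm (Fin n)) (g : MagmaT n) :
    φ • g = g ↔ ∀ p : Fin n × Fin n, g ((Equiv.prodCongr φ φ) p) = φ (g p) := by
  constructor
  · intro h p
    have := congrFun h (φ p.1, φ p.2)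
    rw [magma_smul_def] at this
    simp only [Equiv.Perm.coe_inv, Equiv.symm_apply_apply] at this
    rw [show (Equiv.prodCongr φ φ) p = (φ p.1, φ p.2) from rfl, this]
  · intro h
    funext p
    rw [magma_smul_def]
    have := h (φ⁻¹ p.1, φ⁻¹ p.2)
    rw [show (Equiv.prodCongr φ φ) (φ⁻¹ p.1, φ⁻¹ p.2) = (φ (φ⁻¹ p.1), φ (φ⁻¹ p.2)) from rfl] at this
    simp only [Equiv.Perm.coe_inv, Equiv.apply_symm_apply] at this
    rw [this]
    rfl

/-- The number of isomorphism classes of magmas on a set with cardinality `n` equals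
`(1/n!) ∑_{σ ∈ Sₙ} ∏_{r,s=1}^n (∑_{d ∣ lcm(r,s)} d j_d(σ))^{gcd(r,s) jᵣ(σ) jₛ(σ)}`. -/
theorem card_magma_iso_classes_burnside (n : ℕ) :
    (Nat.card (Quot (MagmaIso n)) : ℚ) =
      (1 / (Nat.factorial n : ℚ)) *
        ∑ σ : Equiv.Perm (Fin n),
          ∏ r ∈ Finset.Icc 1 n, ∏ s ∈ Finset.Icc 1 n,
            (∑ d ∈ (Nat.lcm r s).divisors, (d : ℚ) * (cycleCount σ d : ℚ)) ^
              (Nat.gcd r s * cycleCount σ r * cycleCount σ s) := by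
  classical
  set e : (Fin n → Fin n → Fin n) ≃ MagmaT n := (Equiv.curry (Fin n) (Fin n) (Fin n)).symm
    with he
  -- step 1: the quotient by MagmaIso is the orbit space
  have hquot : Nat.card (Quot (MagmaIso n)) =
      Nat.card (Quotient (MulAction.orbitRel (Equiv.Perm (Fin n)) (MagmaT n))) := by
    apply Nat.card_congr
    refine Quot.congr e ?_
    intro f g
    constructor
    · rintro ⟨φ, hφ⟩
      have hsm : φ • (e f) = e g := by
        funext p
        rw [magma_smul_def]
        have := hφ (φ⁻¹ p.1) (φ⁻¹ p.2)
        simp only [Equiv.Perm.coe_inv, Equiv.apply_symm_apply] at this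
        exact this
      have hmem : e g ∈ MulAction.orbit (Equiv.Perm (Fin n)) (e f) := ⟨φ, hsm⟩
      exact (MulAction.orbitRel (Equiv.Perm (Fin n)) (MagmaT n)).iseqv.symm
        ((MulAction.orbitRel_apply).mpr hmem)
    · intro h
      have hmem : e f ∈ MulAction.orbit (Equiv.Perm (Fin n)) (e g) := (MulAction.orbitRel_apply).mp h
      obtain ⟨φ, hφ⟩ := hmem
      have hφ' : φ • (e g) = e f := hφ
      refine ⟨φ⁻¹, fun a a' => ?_⟩
      have := congrFun hφ' (a, a')
      rw [magma_smul_def] at this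
      have hthis : φ ((e g) (φ⁻¹ a, φ⁻¹ a')) = (e f) (a, a') := this
      have : (e f) (a, a') = f a a' := rfl
      rw [this] at hthis
      have hgg : (e g) (φ⁻¹ a, φ⁻¹ a') = g (φ⁻¹ a) (φ⁻¹ a') := rfl
      rw [hgg] at hthis
      rw [← hthis]
      simp
  -- step 2: Burnside
  have hburn := MulAction.sum_card_fixedBy_eq_card_orbits_mul_card_group
    (G := Equiv.Perm (Fin n)) (X := MagmaT n)
  -- step 3: fixed-point counts
  have hfix : ∀ φ : Equiv.Perm (Fin n), Fintype.card (MulAction.fixedBy (MagmaT n) φ) =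
      ∏ r ∈ Finset.Icc 1 n, ∏ s ∈ Finset.Icc 1 n,
        (∑ d ∈ (Nat.lcm r s).divisors, d * cycleCount φ d) ^
          (Nat.gcd r s * cycleCount φ r * cycleCount φ s) := by
    intro φ
    rw [← Nat.card_eq_fintype_card, ← fixcard φ]
    apply Nat.card_congr
    refine Equiv.subtypeEquivRight ?_
    intro g
    rw [MulAction.mem_fixedBy]
    exact smul_eq_iff_equi φ g
  -- assemble
  have hcardG : Fintype.card (Equiv.Perm (Fin n)) = Nat.factorial n := by
    rw [Fintype.card_perm, Fintype.card_fin]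
  have hΩ : Fintype.card (Quotient (MulAction.orbitRel (Equiv.Perm (Fin n)) (MagmaT n))) =
      Nat.card (Quot (MagmaIso n)) := by
    rw [hquot, Nat.card_eq_fintype_card]
  rw [Finset.sum_congr rfl (fun φ _ => hfix φ), hΩ, hcardG] at hburn
  have hfact : (Nat.factorial n : ℚ) ≠ 0 := Nat.cast_ne_zero.mpr (Nat.factorial_ne_zero n)
  rw [div_mul_eq_mul_div, one_mul, eq_div_iff hfact]
  -- goal: (C : ℚ) * n! = ∑ ...
  have hcast := congrArg (fun m : ℕ => (m : ℚ)) hburn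
  push_cast at hcast
  exact hcast.symm
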